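/- arXiv:math/0205003 — 2 statements merged into one kernel-verified Lean document; each statement's English description precedes it below -/
import Mathlib

section
/- For every x > 0, the series f_ε(x) = Σ_{a=1}^∞ μ(a)/a^ε · ρ(1/(a x)) converges, and equals 1/(x ζ(1+ε)) − Σ_{a ≤ 1/x} μ(a)/a^ε · ⌊1/(a x)⌋, for every ε > 0. -/
open Complex Filter ArithmeticFunction

/-- For every `x > 0` and `ε > 0`, the series
`Σ_{a=1}^∞ μ(a)/a^ε · ρ(1/(a x))` converges and equals
`1/(x ζ(1+ε)) − Σ_{a ≤ 1/x} μ(a)/a^ε · ⌊1/(a x)⌋`. -/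
theorem stmt_0 (x : ℝ) (hx : 0 < x) (ε : ℝ) (hε : 0 < ε) :
    Tendsto (fun n : ℕ =>
        ∑ a ∈ Finset.Icc 1 n,
          ((moebius a : ℂ) / (a : ℂ) ^ (ε : ℂ)) * (Int.fract (1 / (a * x)) : ℝ))
      atTop
      (nhds (1 / (x * riemannZeta (1 + ε)) -
        ∑ a ∈ Finset.Icc 1 ⌊1 / x⌋₊,
          ((moebius a : ℂ) / (a : ℂ) ^ (ε : ℂ)) * ((⌊1 / (a * x)⌋ : ℤ) : ℂ))) := by
  set s : ℂ := 1 + (ε : ℂ) with hs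
  have hsre : 1 < s.re := by simp [hs, hε]
  have hsum : LSeriesSummable (fun n => ((moebius n : ℤ) : ℂ)) s :=
    ArithmeticFunction.LSeriesSummable_moebius_iff.mpr hsre
  have hLmu : LSeries (fun n => ((moebius n : ℤ) : ℂ)) s = 1 / riemannZeta s := by
    have h1 := LSeries_one_mul_Lseries_moebius hsre
    have h2 := LSeries_one_eq_riemannZeta hsre
    have hz := riemannZeta_ne_zero_of_one_lt_re hsre
    rw [h2] at h1
    rw [eq_div_iff hz, mul_comm]
    exact h1
  have hhs2 : HasSum (fun n => (1/(x:ℂ)) * LSeries.term (fun n => ((moebius n : ℤ) : ℂ)) s n)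
      (1 / ((x:ℂ) * riemannZeta s)) := by
    have h0 : HasSum (LSeries.term (fun n => ((moebius n : ℤ) : ℂ)) s)
        (LSeries (fun n => ((moebius n : ℤ) : ℂ)) s) := hsum.hasSum
    rw [hLmu] at h0
    have := h0.mul_left (1/(x:ℂ))
    rwa [mul_one_div, div_div] at this
  set g : ℕ → ℂ := fun n => (1/(x:ℂ)) * LSeries.term (fun n => ((moebius n : ℤ) : ℂ)) s n with hg
  set t2 : ℕ → ℂ := fun a => ((moebius a : ℤ) : ℂ) / (a : ℂ) ^ (ε : ℂ) * ((⌊1 / (a * x)⌋ : ℤ) : ℂ)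
    with ht2
  -- Part A
  have hIcc_range : ∀ n : ℕ, ∑ a ∈ Finset.Icc 1 n, g a = ∑ a ∈ Finset.range (n+1), g a := by
    intro n
    have hsub : Finset.Icc 1 n ⊆ Finset.range (n+1) := by
      intro a ha
      rcases Finset.mem_Icc.mp ha with ⟨h1, h2⟩
      exact Finset.mem_range.mpr (by omega)
    exact (Finset.sum_subset (f := g) hsub (fun a ha ha' => by
      simp only [Finset.mem_range, Finset.mem_Icc] at ha ha'
      have h0 : a = 0 := by omega
      simp [h0, hg, LSeries.term_zero]))
  have hA : Tendsto (fun n : ℕ => ∑ a ∈ Finset.Icc 1 n, g a) atTop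
      (nhds (1 / ((x:ℂ) * riemannZeta s))) := by
    have h := hhs2.tendsto_sum_nat
    have := h.comp (tendsto_add_atTop_nat 1)
    simp only [Function.comp_def] at this
    exact (funext hIcc_range : (fun n => ∑ a ∈ Finset.Icc 1 n, g a) = _) ▸ this
  -- Part B : eventually constant
  have hB : Tendsto (fun n : ℕ => ∑ a ∈ Finset.Icc 1 n, t2 a) atTop
      (nhds (∑ a ∈ Finset.Icc 1 ⌊1/x⌋₊, t2 a)) := by
    refine Tendsto.congr' ?_ tendsto_const_nhds
    filter_upwards [eventually_ge_atTop ⌊1/x⌋₊] with n hn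
    refine (Finset.sum_subset (Finset.Icc_subset_Icc_right hn) (fun a ha ha' => ?_))
    simp only [Finset.mem_Icc, not_and, not_le] at ha ha'
    have h1a : 1 ≤ a := ha.1
    have hfloor : ⌊1/x⌋₊ < a := ha' h1a
    have hax : (1:ℝ) < a * x := by
      have h1 : 1/x < a := by
        calc (1:ℝ)/x < ⌊1/x⌋₊ + 1 := Nat.lt_floor_add_one _
        _ ≤ a := by exact_mod_cast hfloor
      calc (1:ℝ) = (1/x) * x := by field_simp
      _ < a * x := by exact mul_lt_mul_of_pos_right h1 hx
    have : ⌊1 / ((a:ℝ) * x)⌋ = 0 := by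
      rw [Int.floor_eq_zero_iff]
      constructor
      · positivity
      · rw [div_lt_one (by linarith)]; linarith
    simp only [ht2]
    rw [this]
    simp
  -- pointwise identity
  have hpt : ∀ n : ℕ, ∑ a ∈ Finset.Icc 1 n,
      ((moebius a : ℤ) : ℂ) / (a : ℂ) ^ (ε : ℂ) * ((Int.fract (1 / (a * x)) : ℝ) : ℂ)
      = (∑ a ∈ Finset.Icc 1 n, g a) - ∑ a ∈ Finset.Icc 1 n, t2 a := by
    intro n
    rw [← Finset.sum_sub_distrib]
    refine Finset.sum_congr rfl fun a ha => ?_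
    simp only [Finset.mem_Icc] at ha
    have ha0 : a ≠ 0 := by omega
    have haC : (a : ℂ) ≠ 0 := Nat.cast_ne_zero.mpr ha0
    have haR : (0:ℝ) < a := by exact_mod_cast Nat.pos_of_ne_zero ha0
    have hterm : LSeries.term (fun n => ((moebius n : ℤ) : ℂ)) s a
        = ((moebius a : ℤ) : ℂ) / (a : ℂ) ^ s := LSeries.term_of_ne_zero ha0 _ _
    have hcpow : (a : ℂ) ^ s = (a : ℂ) * (a : ℂ) ^ (ε : ℂ) := by
      rw [hs, cpow_add _ _ haC, cpow_one]
    have hεne : (a : ℂ) ^ (ε : ℂ) ≠ 0 := by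
      rw [Ne, cpow_eq_zero_iff]
      tauto
    have hfr : ((Int.fract (1 / ((a:ℝ) * x)) : ℝ) : ℂ)
        = 1 / ((a:ℂ) * (x:ℂ)) - ((⌊1 / ((a:ℝ) * x)⌋ : ℤ) : ℂ) := by
      rw [Int.fract]
      push_cast
      ring
    simp only [hg, ht2]
    rw [hterm, hcpow, hfr, mul_sub]
    have hxC : (x:ℂ) ≠ 0 := by exact_mod_cast hx.ne'
    congr 1
    field_simp
    try ring
    try tauto
  simp only [hpt]
  exact hA.sub hB
end

section
/- Let 0 < ε < 1/2 and n ≥ 1. Define f_{2ε,n}(x) = Σ_{a=1}^n μ(a) a^{−2ε} ρ(1/(a x)) and X_ε(x) = x^{−ε}. Then for all real τ, ∫_0^∞ x^{−1/2 + iτ} X_ε(x) f_{2ε,n}(x) dx = −(ζ(1/2 − ε + iτ)/(1/2 − ε + iτ)) · Σ_{a=1}^n μ(a) a^{−(1/2 + ε + iτ)}. -/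
open Complex MeasureTheory ArithmeticFunction
open Set Filter Asymptotics
open scoped Topology

noncomputable def fC : ℝ → ℂ := fun t => ((Int.fract t : ℝ) : ℂ)

noncomputable def gC : ℝ → ℂ := (Set.Ioi (1:ℝ)).indicator fC

lemma fC_meas : Measurable fC := Complex.measurable_ofReal.comp measurable_fract

lemma gC_meas : Measurable gC := fC_meas.indicator measurableSet_Ioi

lemma fC_norm (t : ℝ) : ‖fC t‖ ≤ 1 := by
  simp only [fC, Complex.norm_real, Real.norm_eq_abs,
    _root_.abs_of_nonneg (Int.fract_nonneg t)]
  exact (Int.fract_lt_one t).le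

lemma gC_norm (t : ℝ) : ‖gC t‖ ≤ 1 := by
  unfold gC
  by_cases h : t ∈ Set.Ioi (1:ℝ)
  · rw [Set.indicator_of_mem h]; exact fC_norm t
  · rw [Set.indicator_of_notMem h]; simp

lemma gC_locInt : LocallyIntegrableOn gC (Ioi 0) := by
  apply MeasureTheory.LocallyIntegrable.locallyIntegrableOn
  rw [MeasureTheory.locallyIntegrable_iff]
  intro K hK
  exact Integrable.mono' (integrableOn_const hK.measure_lt_top.ne)
    (gC_meas.aestronglyMeasurable.restrict) (Filter.Eventually.of_forall fun t => gC_norm t)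

lemma gC_top : gC =O[atTop] (· ^ (-(0:ℝ))) := by
  apply IsBigO.of_bound 1
  filter_upwards [Filter.eventually_ge_atTop (1:ℝ)] with t ht
  rw [neg_zero, Real.rpow_zero]
  simpa using gC_norm t

lemma gC_bot (b : ℝ) : gC =O[𝓝[>] (0:ℝ)] (· ^ (-b)) := by
  apply IsBigO.of_bound 1
  filter_upwards [Ioo_mem_nhdsGT_of_mem (by constructor <;> norm_num : (0:ℝ) ∈ Set.Ico 0 1)] with t ht
  have : gC t = 0 := Set.indicator_of_notMem (by simp only [Set.mem_Ioi]; linarith [ht.2]) _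
  rw [this]
  simp only [norm_zero, one_mul, Real.norm_eq_abs]
  positivity

lemma G_conv {w : ℂ} (hw : 0 < w.re) : MellinConvergent gC (-w) :=
  mellinConvergent_of_isBigO_rpow (a := 0) (b := -w.re - 1) gC_locInt gC_top
    (by simp [hw]) (gC_bot (-w.re - 1)) (by simp)

lemma G_diff {w : ℂ} (hw : 0 < w.re) : DifferentiableAt ℂ (fun z => mellin gC (-z)) w := by
  have h : DifferentiableAt ℂ (mellin gC) (-w) :=
    mellin_differentiableAt_of_isBigO_rpow (a := 0) (b := -w.re - 1) gC_locInt gC_top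
      (by simp [hw]) (gC_bot (-w.re - 1)) (by simp)
  exact h.comp w (differentiableAt_id.neg)

lemma real_integrable {p : ℝ} (hp : 0 < p) :
    IntegrableOn (fun t => Int.fract t * t ^ (-p-1)) (Ioi (1:ℝ)) := by
  apply Integrable.mono' (integrableOn_Ioi_rpow_of_lt (by linarith : -p-1 < -1) zero_lt_one)
  · have h1 : AEStronglyMeasurable (fun t:ℝ => t ^ (-p-1)) (volume.restrict (Ioi 1)) := by
      apply ContinuousOn.aestronglyMeasurable _ measurableSet_Ioi
      intro x hx
      exact (Real.continuousAt_rpow_const x _ (Or.inl (ne_of_gt (lt_trans one_pos hx)))).continuousWithinAt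
    exact measurable_fract.aestronglyMeasurable.restrict.mul h1
  · filter_upwards [ae_restrict_mem measurableSet_Ioi] with t ht
    have ht0 : (0:ℝ) < t := lt_trans one_pos ht
    rw [norm_mul, Real.norm_eq_abs, Real.norm_eq_abs,
      _root_.abs_of_nonneg (Int.fract_nonneg t),
      _root_.abs_of_nonneg (Real.rpow_nonneg ht0.le _)]
    nth_rewrite 2 [← one_mul (t ^ (-p-1))]
    exact mul_le_mul_of_nonneg_right (Int.fract_lt_one t).le (Real.rpow_nonneg ht0.le _)

lemma Ioi_union : Ioi (1:ℝ) = ⋃ n : ℕ, Ioc ((n:ℝ)+1) ((n:ℝ)+2) := by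
  ext x
  simp only [mem_Ioi, mem_iUnion, mem_Ioc]
  constructor
  · intro hx
    have hx0 : (0:ℝ) ≤ x := by linarith
    have h2 : 2 ≤ ⌈x⌉₊ := by
      have : 1 < ⌈x⌉₊ := Nat.lt_ceil.mpr (by exact_mod_cast hx)
      omega
    have hc : ((⌈x⌉₊ - 2 : ℕ) : ℝ) = (⌈x⌉₊ : ℝ) - 2 := by
      push_cast [h2]; ring
    refine ⟨⌈x⌉₊ - 2, ?_, ?_⟩
    · rw [hc]
      have := Nat.ceil_lt_add_one hx0
      linarith
    · rw [hc]
      have := Nat.le_ceil x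
      linarith
  · rintro ⟨n, h1, h2⟩
    have : (0:ℝ) ≤ n := Nat.cast_nonneg n
    linarith

lemma piece (n : ℕ) (p : ℝ) :
    ∫ t in Ioc ((n:ℝ)+1) ((n:ℝ)+2), Int.fract t * t ^ (-p-1)
      = ZetaAsymptotics.term (n+1) p := by
  rw [ZetaAsymptotics.term, intervalIntegral.integral_of_le (by push_cast; linarith)]
  have hcast : ((n+1:ℕ):ℝ) = (n:ℝ)+1 := by push_cast; ring
  rw [hcast, show (n:ℝ)+1+1 = (n:ℝ)+2 by ring]
  rw [integral_Ioc_eq_integral_Ioo, integral_Ioc_eq_integral_Ioo]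
  apply setIntegral_congr_fun measurableSet_Ioo
  intro x hx
  have hn0 : (0:ℝ) ≤ n := Nat.cast_nonneg n
  have hx0 : (0:ℝ) < x := by have := hx.1; linarith
  have hfl : ⌊x⌋ = (n:ℤ)+1 := by
    rw [Int.floor_eq_iff]
    constructor
    · push_cast; linarith [hx.1]
    · push_cast; linarith [hx.2]
  have h1 : Int.fract x = x - ((n:ℝ)+1) := by
    rw [Int.fract, hfl]; push_cast; ring
  show Int.fract x * x ^ (-p-1) = (x - ((n:ℝ)+1)) / x ^ (p+1)
  rw [h1, show -p-1 = -(p+1) by ring, Real.rpow_neg hx0.le, div_eq_mul_inv]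

lemma real_eq {p : ℝ} (hp : 0 < p) :
    ∫ t in Ioi (1:ℝ), Int.fract t * t ^ (-p-1) = ZetaAsymptotics.termTSum p := by
  rw [Ioi_union, MeasureTheory.integral_iUnion (fun n => measurableSet_Ioc) ?disj ?int]
  · rw [ZetaAsymptotics.termTSum]
    exact tsum_congr fun n => piece n p
  case disj =>
    intro m k hmk
    refine Set.Ioc_disjoint_Ioc.mpr ?_
    rcases hmk.lt_or_gt with h | h
    · have : (m:ℝ) + 1 ≤ (k:ℝ) := by exact_mod_cast h
      exact min_le_of_left_le (le_trans (by linarith) (le_max_right _ _))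
    · have : (k:ℝ) + 1 ≤ (m:ℝ) := by exact_mod_cast h
      exact min_le_of_right_le (le_trans (by linarith) (le_max_left _ _))
  case int =>
    rw [← Ioi_union]; exact real_integrable hp

lemma mellin_gC_real {p : ℝ} (hp : 1 < p) :
    mellin gC (-(p:ℂ)) = ((1/(p-1) - 1/p * ∑' n:ℕ, 1/(n+1:ℝ)^p : ℝ) : ℂ) := by
  rw [← ZetaAsymptotics.termTSum_of_lt hp, ← real_eq (by linarith : (0:ℝ) < p), mellin]
  have h1 : ∀ t ∈ Ioi (0:ℝ), ((t:ℂ)^((-(p:ℂ))-1) • gC t)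
      = (Ioi (1:ℝ)).indicator (fun t => ((Int.fract t * t^(-p-1) : ℝ) : ℂ)) t := by
    intro t ht
    by_cases h : t ∈ Ioi (1:ℝ)
    · rw [Set.indicator_of_mem h]
      unfold gC fC
      rw [Set.indicator_of_mem h, smul_eq_mul, mul_comm, ofReal_mul]
      congr 1
      rw [show ((-(p:ℂ))-1) = ((-p-1 : ℝ) : ℂ) by push_cast; ring,
        ← Complex.ofReal_cpow (le_of_lt (mem_Ioi.mp ht))]
    · rw [Set.indicator_of_notMem h]
      unfold gC
      rw [Set.indicator_of_notMem h, smul_zero]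
  rw [setIntegral_congr_fun measurableSet_Ioi h1,
    integral_indicator measurableSet_Ioi, Measure.restrict_restrict measurableSet_Ioi,
    show Ioi (1:ℝ) ∩ Ioi 0 = Ioi 1 by
      rw [Set.inter_eq_left]; exact fun x hx => mem_Ioi.mpr (lt_trans one_pos (mem_Ioi.mp hx))]
  exact integral_ofReal

noncomputable def Z1 : ℂ → ℂ :=
  fun z => (z-1) * (riemannZeta z - 1/(z-1)/Complex.Gammaℝ z) + 1/Complex.Gammaℝ z

lemma Z1_eq {z : ℂ} (h0 : 0 < z.re) (hz : z ≠ 1) : Z1 z = (z-1) * riemannZeta z := by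
  have h1 : z - 1 ≠ 0 := sub_ne_zero.mpr hz
  have hG : Complex.Gammaℝ z ≠ 0 := Complex.Gammaℝ_ne_zero_of_re_pos h0
  unfold Z1
  field_simp
  ring

lemma Phi_eq_Psi {z : ℂ} (h0 : 0 < z.re) :
    z * (z - 1) * mellin gC (-z) = z - Z1 z := by
  have hU : IsOpen {w : ℂ | 0 < w.re} := isOpen_lt continuous_const Complex.continuous_re
  have hPhi : AnalyticOnNhd ℂ (fun w => w * (w - 1) * mellin gC (-w)) {w | 0 < w.re} := by
    apply DifferentiableOn.analyticOnNhd _ hU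
    intro w hw
    exact ((differentiableAt_id.mul (differentiableAt_id.sub (differentiableAt_const 1))).mul
      (G_diff hw)).differentiableWithinAt
  have hPsi : AnalyticOnNhd ℂ (fun w => w - Z1 w) {w | 0 < w.re} := by
    apply DifferentiableOn.analyticOnNhd _ hU
    intro w hw
    apply DifferentiableAt.differentiableWithinAt
    apply differentiableAt_id.sub
    unfold Z1
    have hGinv : DifferentiableAt ℂ (fun v : ℂ => 1 / Complex.Gammaℝ v) w := by
      simpa [one_div] using (Complex.differentiable_Gammaℝ_inv w)
    refine DifferentiableAt.add ?_ hGinv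
    by_cases hw1 : w = 1
    · subst hw1
      have hE : DifferentiableAt ℂ
          (fun v => riemannZeta v - 1/(v-1)/Complex.Gammaℝ v) 1 := by
        have := HurwitzZeta.differentiableAt_hurwitzZeta_sub_one_div 0
        simpa [HurwitzZeta.hurwitzZeta_zero] using this
      exact (differentiableAt_id.sub (differentiableAt_const 1)).mul hE
    · have h1 : w - 1 ≠ 0 := sub_ne_zero.mpr hw1
      apply (differentiableAt_id.sub (differentiableAt_const 1)).mul
      apply (differentiableAt_riemannZeta hw1).sub
      have heq : (fun v : ℂ => 1/(v-1)/Complex.Gammaℝ v)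
          = fun v => (1/(v-1)) * (Complex.Gammaℝ v)⁻¹ := by
        funext v; rw [div_eq_mul_inv]
      rw [heq]
      have d1 : DifferentiableAt ℂ (fun v : ℂ => 1/(v-1)) w :=
        (differentiableAt_const _).div
          (differentiableAt_id.sub (differentiableAt_const _)) h1
      exact d1.mul (Complex.differentiable_Gammaℝ_inv w)
  have key : ∀ p : ℝ, 1 < p →
      (p:ℂ) * ((p:ℂ) - 1) * mellin gC (-(p:ℂ)) = (p:ℂ) - Z1 (p:ℂ) := by
    intro p hp
    have hp0 : (0:ℝ) < p := lt_trans one_pos hp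
    have hp1 : (p:ℂ) ≠ 1 := by
      intro h; rw [show (1:ℂ) = ((1:ℝ):ℂ) by norm_num] at h
      exact (ne_of_gt hp) (Complex.ofReal_injective h)
    have hpre : 0 < (p:ℂ).re := by simpa using hp0
    rw [mellin_gC_real hp, Z1_eq hpre hp1]
    have hz : riemannZeta (p:ℂ) = ((∑' n:ℕ, 1/(n+1:ℝ)^p : ℝ) : ℂ) := by
      rw [zeta_eq_tsum_one_div_nat_add_one_cpow (by simpa using hp), Complex.ofReal_tsum]
      congr 1; funext n
      rw [Complex.ofReal_div, Complex.ofReal_one,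
        Complex.ofReal_cpow (by positivity : (0:ℝ) ≤ (n:ℝ)+1)]
      norm_num
    rw [hz]
    have hp1' : (p:ℂ) - 1 ≠ 0 := sub_ne_zero.mpr hp1
    have hp0' : (p:ℂ) ≠ 0 := by
      intro h; rw [show (0:ℂ) = ((0:ℝ):ℂ) by norm_num] at h
      exact (ne_of_gt hp0) (Complex.ofReal_injective h)
    push_cast
    field_simp
  have hseq : Tendsto (fun k : ℕ => ((2 + ((k:ℝ)+1)⁻¹ : ℝ) : ℂ)) atTop (𝓝[≠] (2:ℂ)) := by
    rw [tendsto_nhdsWithin_iff]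
    constructor
    · have h2 : Tendsto (fun k:ℕ => (2 + ((k:ℝ)+1)⁻¹ : ℝ)) atTop (𝓝 2) := by
        have h3 : Tendsto (fun k:ℕ => (((k:ℝ)+1)⁻¹ : ℝ)) atTop (𝓝 0) := by
          simpa only [one_div] using tendsto_one_div_add_atTop_nhds_zero_nat (𝕜 := ℝ)
        simpa using tendsto_const_nhds.add h3
      have h4 := (Complex.continuous_ofReal.tendsto 2).comp h2
      rw [show ((2:ℂ)) = ((2:ℝ):ℂ) by norm_num]
      exact h4
    · apply Eventually.of_forall; intro k
      simp only [Set.mem_compl_iff, Set.mem_singleton_iff]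
      intro h
      rw [show (2:ℂ) = ((2:ℝ):ℂ) by norm_num] at h
      have := Complex.ofReal_injective h
      have hpos : (0:ℝ) < ((k:ℝ)+1)⁻¹ := by positivity
      linarith
  have hfreq : ∃ᶠ w in 𝓝[≠] (2:ℂ),
      (fun w => w * (w - 1) * mellin gC (-w)) w = (fun w => w - Z1 w) w := by
    apply hseq.frequently
    apply Frequently.of_forall
    intro k
    have : (1:ℝ) < 2 + ((k:ℝ)+1)⁻¹ := by
      have : (0:ℝ) < ((k:ℝ)+1)⁻¹ := by positivity
      linarith
    exact key _ this
  have heq := hPhi.eqOn_of_preconnected_of_frequently_eq hPsi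
    ((convex_halfSpace_re_gt 0).isPreconnected)
    (by norm_num : (2:ℂ) ∈ {w:ℂ | 0 < w.re}) hfreq
  exact heq h0

lemma mellin_gC_eq {w : ℂ} (h0 : 0 < w.re) (h1 : w.re < 1) :
    mellin gC (-w) = 1/(w-1) - riemannZeta w / w := by
  have hw1 : w ≠ 1 := by intro h; rw [h] at h1; simp at h1
  have hw0 : w ≠ 0 := by intro h; rw [h] at h0; simp at h0
  have h2 : w - 1 ≠ 0 := sub_ne_zero.mpr hw1
  have hPP := Phi_eq_Psi h0
  rw [Z1_eq h0 hw1] at hPP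
  have h3 : mellin gC (-w) = (w - (w-1) * riemannZeta w) / (w * (w-1)) := by
    rw [eq_div_iff (mul_ne_zero hw0 h2)]
    linear_combination hPP
  rw [h3, div_sub_div _ _ h2 hw0, one_mul, mul_comm w (w-1)]


lemma fC_ae : ∀ᵐ t ∂(volume.restrict (Ioi (0:ℝ))),
    fC t = (Ioc (0:ℝ) 1).indicator (fun t:ℝ => (t:ℂ)^(1:ℂ)) t + gC t := by
  have h1 : ∀ᵐ (t:ℝ), t ≠ 1 := by
    rw [ae_iff]
    simp only [ne_eq, not_not]
    have : {x : ℝ | x = 1} = {1} := by ext x; simp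
    rw [this]
    exact measure_singleton 1
  filter_upwards [ae_restrict_of_ae h1, ae_restrict_mem measurableSet_Ioi] with t ht1 ht0
  rw [mem_Ioi] at ht0
  by_cases h : t ≤ 1
  · have ht01 : t ∈ Ioc (0:ℝ) 1 := ⟨ht0, h⟩
    have hlt : t < 1 := lt_of_le_of_ne h ht1
    rw [Set.indicator_of_mem ht01,
      show gC t = 0 from Set.indicator_of_notMem (by simp [not_lt.mpr h]) _,
      add_zero, Complex.cpow_one]
    unfold fC
    rw [Int.fract_eq_self.mpr ⟨le_of_lt ht0, hlt⟩]
  · push_neg at h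
    rw [Set.indicator_of_notMem (by simp [h, not_le.mpr h] : t ∉ Ioc (0:ℝ) 1), zero_add]
    unfold gC
    rw [Set.indicator_of_mem (mem_Ioi.mpr h)]

lemma hasMellin_fC {w : ℂ} (h0 : 0 < w.re) (h1 : w.re < 1) :
    HasMellin fC (-w) (-(riemannZeta w / w)) := by
  have hind := hasMellin_cpow_Ioc 1 (s := -w) (by simp; linarith)
  have hg : MellinConvergent gC (-w) := G_conv h0
  have hsum := hasMellin_add hind.1 hg
  have hae : (fun t:ℝ => (t:ℂ)^(-w-1) • fC t)
      =ᵐ[volume.restrict (Ioi 0)] (fun t:ℝ => (t:ℂ)^(-w-1) •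
        ((Ioc (0:ℝ) 1).indicator (fun t:ℝ => (t:ℂ)^(1:ℂ)) t + gC t)) := by
    filter_upwards [fC_ae] with t ht; rw [ht]
  constructor
  · exact hsum.1.congr hae.symm
  · have hval : mellin fC (-w)
        = mellin (fun t:ℝ => (Ioc (0:ℝ) 1).indicator (fun t:ℝ => (t:ℂ)^(1:ℂ)) t + gC t) (-w) :=
      integral_congr_ae hae
    rw [hval, hsum.2, hind.2, mellin_gC_eq h0 h1,
      show (-w + 1) = -(w-1) by ring, one_div, inv_neg, ← one_div]
    ring

lemma hasMellin_scaled {w : ℂ} (h0 : 0 < w.re) (h1 : w.re < 1) {a : ℕ} (ha : 1 ≤ a) :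
    HasMellin (fun x : ℝ => fC (((a:ℝ)*x)⁻¹)) w ((a:ℂ)^(-w) * (-(riemannZeta w / w))) := by
  have haR : (0:ℝ) < a := by exact_mod_cast ha
  have hbase := hasMellin_fC h0 h1
  have he : (fun t : ℝ => fC (t ^ (-1:ℝ))) = fun t : ℝ => fC t⁻¹ := by
    funext t; rw [Real.rpow_neg_one]
  have hfi_conv : MellinConvergent (fun t : ℝ => fC t⁻¹) w := by
    have hiff := MellinConvergent.comp_rpow (f := fC) (s := w) (a := -1)
      (by norm_num : (-1:ℝ) ≠ 0)
    rw [he] at hiff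
    have hdiv : (w / ((-1:ℝ):ℂ)) = -w := by push_cast; ring
    rw [hiff, hdiv]
    exact hbase.1
  have hfi_val : mellin (fun t : ℝ => fC t⁻¹) w = -(riemannZeta w / w) := by
    rw [mellin_comp_inv fC w]
    exact hbase.2
  constructor
  · exact (MellinConvergent.comp_mul_left (f := fun t : ℝ => fC t⁻¹) (s := w) haR).mpr hfi_conv
  · rw [mellin_comp_mul_left (fun t : ℝ => fC t⁻¹) w haR, hfi_val, smul_eq_mul]
    norm_cast

/-- Mellin transform on the critical line of `X_ε · f_{2ε,n}`:
`∫_0^∞ x^{−1/2+iτ} x^{−ε} f_{2ε,n}(x) dx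
  = −(ζ(1/2−ε+iτ)/(1/2−ε+iτ)) Σ_{a=1}^n μ(a) a^{−(1/2+ε+iτ)}`. -/
theorem stmt_6 (ε : ℝ) (hε : 0 < ε) (hε' : ε < 1 / 2) (n : ℕ) (hn : 1 ≤ n) (τ : ℝ) :
    ∫ x in Set.Ioi (0 : ℝ),
        (x : ℂ) ^ (-(1 / 2 : ℂ) + I * τ) * ((x ^ (-ε) : ℝ) : ℂ) *
          (∑ a ∈ Finset.Icc 1 n,
            (moebius a : ℝ) * (a : ℝ) ^ (-(2 * ε)) * Int.fract (1 / (a * x)) : ℝ) =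
      -(riemannZeta (1 / 2 - ε + I * τ) / (1 / 2 - ε + I * τ)) *
        ∑ a ∈ Finset.Icc 1 n, (moebius a : ℂ) * (a : ℂ) ^ (-(1 / 2 + ε + I * τ)) := by
  set w : ℂ := 1 / 2 - ε + I * τ with hw
  have hwre : w.re = 1/2 - ε := by
    simp [hw]
  have h0 : 0 < w.re := by rw [hwre]; linarith
  have h1 : w.re < 1 := by rw [hwre]; linarith
  have hpt : ∀ x ∈ Ioi (0:ℝ),
      (x : ℂ) ^ (-(1 / 2 : ℂ) + I * τ) * ((x ^ (-ε) : ℝ) : ℂ) *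
          ((∑ a ∈ Finset.Icc 1 n,
            (moebius a : ℝ) * (a : ℝ) ^ (-(2 * ε)) * Int.fract (1 / (a * x)) : ℝ) : ℂ)
        = ∑ a ∈ Finset.Icc 1 n,
            (((moebius a : ℝ) * (a:ℝ)^(-(2*ε)) : ℝ) : ℂ)
              * ((x:ℂ)^(w-1) * fC (((a:ℝ)*x)⁻¹)) := by
    intro x hx
    rw [mem_Ioi] at hx
    have hx0 : (x:ℂ) ≠ 0 := by exact_mod_cast ne_of_gt hx
    have hpow : (x:ℂ) ^ (-(1/2:ℂ) + I*τ) * ((x ^ (-ε) : ℝ) : ℂ) = (x:ℂ)^(w-1) := by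
      rw [Complex.ofReal_cpow hx.le, ← Complex.cpow_add _ _ hx0]
      congr 1
      push_cast [hw]
      ring
    rw [hpow]
    push_cast
    rw [Finset.mul_sum]
    apply Finset.sum_congr rfl
    intro a _
    unfold fC
    rw [← one_div]
    push_cast
    ring
  have hint : ∀ a ∈ Finset.Icc 1 n,
      Integrable (fun x:ℝ => (((moebius a : ℝ) * (a:ℝ)^(-(2*ε)) : ℝ) : ℂ)
        * ((x:ℂ)^(w-1) * fC (((a:ℝ)*x)⁻¹))) (volume.restrict (Ioi 0)) := by
    intro a hamem
    have ha : 1 ≤ a := (Finset.mem_Icc.mp hamem).1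
    have hm := (hasMellin_scaled h0 h1 ha).1
    have hm' : Integrable (fun x:ℝ => (x:ℂ)^(w-1) * fC (((a:ℝ)*x)⁻¹))
        (volume.restrict (Ioi 0)) := by
      simpa [MellinConvergent, IntegrableOn, smul_eq_mul] using hm
    exact hm'.const_mul _
  rw [setIntegral_congr_fun measurableSet_Ioi hpt,
    MeasureTheory.integral_finset_sum _ hint]
  have hterm : ∀ a ∈ Finset.Icc 1 n,
      (∫ x in Ioi (0:ℝ), (((moebius a : ℝ) * (a:ℝ)^(-(2*ε)) : ℝ) : ℂ)
          * ((x:ℂ)^(w-1) * fC (((a:ℝ)*x)⁻¹)))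
        = -(riemannZeta w / w) * ((moebius a : ℂ) * (a:ℂ)^(-(1/2+ε+I*τ))) := by
    intro a hamem
    have ha : 1 ≤ a := (Finset.mem_Icc.mp hamem).1
    have haC : (a:ℂ) ≠ 0 := Nat.cast_ne_zero.mpr (by omega)
    rw [integral_const_mul]
    have hsm := (hasMellin_scaled h0 h1 ha).2
    have hsm' : (∫ x in Ioi (0:ℝ), (x:ℂ)^(w-1) * fC (((a:ℝ)*x)⁻¹))
        = (a:ℂ)^(-w) * (-(riemannZeta w / w)) := by
      rw [← hsm, mellin]
      simp [smul_eq_mul]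
    rw [hsm']
    have hcomb : ((a:ℂ)^((-(2*ε):ℝ):ℂ)) * (a:ℂ)^(-w) = (a:ℂ)^(-(1/2+ε+I*τ)) := by
      rw [← Complex.cpow_add _ _ haC]
      congr 1
      push_cast [hw]
      ring
    rw [Complex.ofReal_mul, Complex.ofReal_cpow (Nat.cast_nonneg a)]
    push_cast at hcomb ⊢
    linear_combination ((moebius a : ℂ) * (-(riemannZeta w / w))) * hcomb
  rw [Finset.sum_congr rfl hterm, ← Finset.mul_sum]
end
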